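/- Let N ≥ 2 and let a ∈ {1,...,N-1}. Suppose p_N : {0,...,N} → (0,1) and p_{N+1} : {0,...,N+1} → (0,1) satisfy the extension relation p_N(b) = p_{N+1}(b)/(1 - p_{N+1}(b+1) + p_{N+1}(b)) for all b = 0,...,N. If p_N(a) = a/N and p_{N+1}(a) = a/(N+1), then p_{N+1}(a+1) = (a+1)/(N+1). -/

import Mathlib

/-- One upward step of Theorem 4: if level-`N` predictive probabilities mimic
the frequency at `a` and the extension at level `N+1` also mimics the
frequency at `a`, then coherency forces frequency mimicking at `a+1` at
level `N+1`. -/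
theorem stmt_6 (N a : ℕ) (hN : 2 ≤ N) (ha₁ : 1 ≤ a) (ha₂ : a ≤ N - 1)
    (pN pN1 : ℕ → ℝ)
    (hrN : ∀ b ≤ N, pN b ∈ Set.Ioo (0 : ℝ) 1)
    (hrN1 : ∀ b ≤ N + 1, pN1 b ∈ Set.Ioo (0 : ℝ) 1)
    (hext : ∀ b ≤ N, pN b = pN1 b / (1 - pN1 (b + 1) + pN1 b))
    (hfmN : pN a = (a : ℝ) / (N : ℝ))
    (hfmN1 : pN1 a = (a : ℝ) / ((N : ℝ) + 1)) :
    pN1 (a + 1) = ((a : ℝ) + 1) / ((N : ℝ) + 1) := by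
  have haN : a ≤ N := le_trans ha₂ (Nat.sub_le N 1)
  have h := hext a haN
  have h1 := hrN1 (a + 1) (by omega)
  have h2 := hrN1 a (by omega)
  have hNpos : (0 : ℝ) < N := by positivity
  have hapos : (0 : ℝ) < a := by exact_mod_cast ha₁
  have hd : 0 < 1 - pN1 (a + 1) + pN1 a := by
    have := h1.2; have := h2.1; linarith
  rw [hfmN, hfmN1] at h
  rw [hfmN1] at hd
  have hN1 : (0 : ℝ) < (N : ℝ) + 1 := by linarith
  field_simp at h
  have hD : (0:ℝ) < (1 - pN1 (a + 1)) * ((N:ℝ) + 1) + a := by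
    have he : (1 - pN1 (a + 1) + (a:ℝ)/((N:ℝ)+1)) * ((N:ℝ) + 1)
        = (1 - pN1 (a + 1)) * ((N:ℝ) + 1) + a := by field_simp
    nlinarith [mul_pos hd hN1]
  rw [mul_comm ((N:ℝ)+1), eq_div_iff hD.ne'] at h
  have hDN : (1 - pN1 (a + 1)) * ((N:ℝ) + 1) + a = N := by
    have := h
    linarith [this]
  field_simp
  nlinarith [hDN]
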